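/- Let n ≥ 2, let M be a finite message set, let R ≥ 1, let e : {0,1}^n × {1,…,R} → M be an encoding and f_t : M → {0,1} (t ∈ {1,…,n}) be decoders. Suppose the classical RAC is parity-oblivious: for every S ⊆ {1,…,n} with |S| ≥ 2 and every m ∈ M, #{(x,r) : x_S = 0 and e(x,r) = m} = #{(x,r) : x_S = 1 and e(x,r) = m}. Then the average success probability satisfies (1/(n·2^n·R)) · #{(x,r,t) : f_t(e(x,r)) = x_t} ≤ (1/2)(1 + 1/n); that is, the average-case bias is at most 1/n. -/

import Mathlib

open BigOperators Finset

namespace RACaux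

def sg (a : ZMod 2) : ℤ := if a = 0 then 1 else -1

lemma sg_add : ∀ a b : ZMod 2, sg (a + b) = sg a * sg b := by decide
lemma zmod2_ne_zero : ∀ a : ZMod 2, ¬ a = 0 ↔ a = 1 := by decide
lemma zmod2_cases : ∀ a : ZMod 2, a = 0 ∨ a = 1 := by decide
lemma sg_mul_sg : ∀ a b : ZMod 2, sg a * sg b + 1 = if a = b then 2 else 0 := by decide
lemma sg_zero : sg 0 = 1 := by decide
lemma sg_one : sg 1 = -1 := by decide

lemma prod_sg {n : ℕ} (x : Fin n → ZMod 2) (S : Finset (Fin n)) :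
    ∏ i ∈ S, sg (x i) = sg (∑ i ∈ S, x i) := by
  induction S using Finset.induction_on with
  | empty => simp [sg]
  | insert _ _ h ih => rw [Finset.prod_insert h, Finset.sum_insert h, sg_add, ih]

lemma sum_sg_eq {α : Type*} [DecidableEq α] (s : Finset α) (g : α → ZMod 2) :
    ∑ a ∈ s, sg (g a) =
      ((s.filter (fun a => g a = 0)).card : ℤ) - ((s.filter (fun a => g a = 1)).card : ℤ) := by
  classical
  have h1 : (s.filter (fun a => ¬ g a = 0)) = s.filter (fun a => g a = 1) :=
    Finset.filter_congr (fun a _ => by simpa using zmod2_ne_zero (g a))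
  rw [show (∑ a ∈ s, sg (g a)) = ∑ a ∈ s, if g a = 0 then (1:ℤ) else -1 from rfl,
    Finset.sum_ite, Finset.sum_const, Finset.sum_const, h1]
  ring

lemma card_split {α : Type*} [DecidableEq α] (s : Finset α) (g : α → ZMod 2) :
    ((s.filter (fun a => g a = 0)).card : ℤ) + ((s.filter (fun a => g a = 1)).card : ℤ)
      = s.card := by
  classical
  have h1 : (s.filter (fun a => ¬ g a = 0)) = s.filter (fun a => g a = 1) :=
    Finset.filter_congr (fun a _ => by simpa using zmod2_ne_zero (g a))
  have := Finset.card_filter_add_card_filter_not (s := s) (p := fun a => g a = 0)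
  rw [h1] at this
  exact_mod_cast this

lemma key {n : ℕ} {β : Type*} [DecidableEq β] (s : Finset β) (x : β → Fin n → ZMod 2)
    (y : Fin n → ZMod 2) :
    (2^n : ℤ) * ((s.filter (fun p => x p = y)).card : ℤ)
      = ∑ S : Finset (Fin n), (∏ i ∈ S, sg (y i)) * ∑ p ∈ s, ∏ i ∈ S, sg (x p i) := by
  classical
  have step1 : ∀ S : Finset (Fin n),
      (∏ i ∈ S, sg (y i)) * ∑ p ∈ s, ∏ i ∈ S, sg (x p i)
        = ∑ p ∈ s, ∏ i ∈ S, (sg (y i) * sg (x p i)) := by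
    intro S
    rw [Finset.mul_sum]
    exact Finset.sum_congr rfl fun p _ => by rw [← Finset.prod_mul_distrib]
  rw [Finset.sum_congr rfl fun S _ => step1 S, Finset.sum_comm]
  have step2 : ∀ p, (∑ S : Finset (Fin n), ∏ i ∈ S, (sg (y i) * sg (x p i)))
      = if x p = y then (2:ℤ)^n else 0 := by
    intro p
    have hprod : (∑ S : Finset (Fin n), ∏ i ∈ S, (sg (y i) * sg (x p i)))
        = ∏ i : Fin n, (sg (y i) * sg (x p i) + 1) := by
      rw [Finset.prod_add]
      rw [Finset.powerset_univ]
      exact Finset.sum_congr rfl fun S _ => by simp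
    rw [hprod]
    have hfac : ∀ i, sg (y i) * sg (x p i) + 1 = if y i = x p i then (2:ℤ) else 0 :=
      fun i => sg_mul_sg _ _
    rw [Finset.prod_congr rfl fun i _ => hfac i]
    by_cases h : x p = y
    · simp [h]
    · obtain ⟨i, hi⟩ : ∃ i, ¬ y i = x p i := by
        by_contra hc
        push_neg at hc
        exact h (funext fun i => (hc i).symm)
      rw [if_neg h]
      apply Finset.prod_eq_zero (Finset.mem_univ i)
      exact if_neg hi
  rw [Finset.sum_congr rfl fun p _ => step2 p, ← Finset.sum_filter,
    Finset.sum_const, nsmul_eq_mul, mul_comm]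

lemma sum_subsets_eq {n : ℕ} (h : Finset (Fin n) → ℤ) (hz : ∀ S, 2 ≤ S.card → h S = 0) :
    ∑ S : Finset (Fin n), h S = h ∅ + ∑ t : Fin n, h {t} := by
  classical
  set T : Finset (Finset (Fin n)) :=
    insert ∅ (Finset.univ.image fun t => ({t} : Finset (Fin n))) with hT
  have hsub : ∑ S ∈ T, h S = ∑ S : Finset (Fin n), h S := by
    apply Finset.sum_subset (Finset.subset_univ T)
    intro S _ hS
    apply hz
    by_contra hc
    push_neg at hc
    interval_cases hcard : S.card
    · exact hS (by simp [hT, Finset.card_eq_zero.mp hcard])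
    · obtain ⟨t, ht⟩ := Finset.card_eq_one.mp hcard
      exact hS (by simp [hT, ht, Finset.mem_insert, Finset.mem_image])
  rw [← hsub, hT, Finset.sum_insert, Finset.sum_image]
  · intro t _ u _ htu
    exact Finset.singleton_inj.mp htu
  · simp

end RACaux

open RACaux

/-- Every parity-oblivious classical random access code of `n ≥ 2` bits has
average success probability at most `(1/2)(1 + 1/n)`, i.e. average-case bias at most `1/n`. -/
theorem parity_oblivious_classical_rac_average_bias_le
    (n R : ℕ) (hn : 2 ≤ n) (hR : 1 ≤ R)
    (M : Type) [Fintype M] [DecidableEq M]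
    (e : (Fin n → ZMod 2) → Fin R → M)
    (f : Fin n → M → ZMod 2)
    (hpo : ∀ S : Finset (Fin n), 2 ≤ S.card → ∀ m : M,
      (Finset.univ.filter (fun p : (Fin n → ZMod 2) × Fin R =>
        (∑ i ∈ S, p.1 i) = 0 ∧ e p.1 p.2 = m)).card =
      (Finset.univ.filter (fun p : (Fin n → ZMod 2) × Fin R =>
        (∑ i ∈ S, p.1 i) = 1 ∧ e p.1 p.2 = m)).card) :
    ((Finset.univ.filter (fun q : (Fin n → ZMod 2) × Fin R × Fin n =>
        f q.2.2 (e q.1 q.2.1) = q.1 q.2.2)).card : ℝ) / (n * 2 ^ n * R)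
      ≤ (1 / 2) * (1 + 1 / n) := by
  classical
  set Em : M → Finset ((Fin n → ZMod 2) × Fin R) :=
    fun m => Finset.univ.filter (fun p => e p.1 p.2 = m) with hEmdef
  set A : Fin n → M → ℤ := fun t m => ∑ p ∈ Em m, sg (p.1 t) with hAdef
  set N : M → ℤ := fun m => ((Em m).card : ℤ) with hNdef
  -- parity-obliviousness in character form
  have hpo2 : ∀ S : Finset (Fin n), 2 ≤ S.card → ∀ m,
      ∑ p ∈ Em m, ∏ i ∈ S, sg (p.1 i) = 0 := by
    intro S hS m
    have h1 : ∑ p ∈ Em m, ∏ i ∈ S, sg (p.1 i) = ∑ p ∈ Em m, sg (∑ i ∈ S, p.1 i) :=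
      Finset.sum_congr rfl fun p _ => prod_sg _ _
    rw [h1, sum_sg_eq]
    have h2 : (Em m).filter (fun p => (∑ i ∈ S, p.1 i) = 0)
        = Finset.univ.filter (fun p : (Fin n → ZMod 2) × Fin R =>
            (∑ i ∈ S, p.1 i) = 0 ∧ e p.1 p.2 = m) := by
      simp only [hEmdef, Finset.filter_filter]
      exact Finset.filter_congr fun p _ => by tauto
    have h3 : (Em m).filter (fun p => (∑ i ∈ S, p.1 i) = 1)
        = Finset.univ.filter (fun p : (Fin n → ZMod 2) × Fin R =>
            (∑ i ∈ S, p.1 i) = 1 ∧ e p.1 p.2 = m) := by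
      simp only [hEmdef, Finset.filter_filter]
      exact Finset.filter_congr fun p _ => by tauto
    rw [h2, h3, hpo S hS m, sub_self]
  -- Fourier inversion reduced to degree ≤ 1
  have key2 : ∀ (m : M) (y : Fin n → ZMod 2),
      (2^n : ℤ) * (((Em m).filter (fun p => p.1 = y)).card : ℤ)
        = N m + ∑ t, sg (y t) * A t m := by
    intro m y
    rw [key (Em m) (fun p => p.1) y]
    rw [sum_subsets_eq (fun S => (∏ i ∈ S, sg (y i)) * ∑ p ∈ Em m, ∏ i ∈ S, sg (p.1 i))
        (fun S hS => by simp only [hpo2 S hS m, mul_zero])]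
    simp [hNdef, hAdef]
  -- ℓ¹ bound on degree-one coefficients
  have inv : ∀ m, ∑ t, |A t m| ≤ N m := by
    intro m
    have hkey := key2 m (fun t => if 0 < A t m then 1 else 0)
    have hterm : ∀ t, sg (if 0 < A t m then (1 : ZMod 2) else 0) * A t m = -|A t m| := by
      intro t
      by_cases h : 0 < A t m
      · rw [if_pos h, sg_one, abs_of_pos h]; ring
      · rw [if_neg h, sg_zero, abs_of_nonpos (not_lt.mp h)]; ring
    rw [Finset.sum_congr rfl (fun t _ => hterm t)] at hkey
    have hpos : (0:ℤ) ≤ (2^n : ℤ) *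
        (((Em m).filter (fun p => p.1 = fun t => if 0 < A t m then 1 else 0)).card : ℤ) :=
      mul_nonneg (by positivity) (Int.natCast_nonneg _)
    rw [hkey] at hpos
    have hsum : ∑ t, -|A t m| = -∑ t, |A t m| := by rw [Finset.sum_neg_distrib]
    rw [hsum] at hpos
    linarith
  -- success count per (t, m)
  have hS2 : ∀ (t : Fin n) (m : M),
      2 * (((Em m).filter (fun p => p.1 t = f t m)).card : ℤ) ≤ N m + |A t m| := by
    intro t m
    have hA' : A t m = ((((Em m).filter (fun p => p.1 t = 0)).card : ℤ))
        - (((Em m).filter (fun p => p.1 t = 1)).card : ℤ) := by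
      simp only [hAdef]
      exact sum_sg_eq (Em m) (fun p => p.1 t)
    have hsplit := card_split (Em m) (fun p => p.1 t)
    rcases zmod2_cases (f t m) with h | h <;> rw [h]
    · have := le_abs_self (A t m)
      simp only [hNdef] at *
      linarith
    · have := neg_abs_le (A t m)
      simp only [hNdef] at *
      linarith
  -- total mass
  have hNtot : ∑ m, N m = (2:ℤ)^n * R := by
    have hfib := Finset.card_eq_sum_card_fiberwise
      (s := (Finset.univ : Finset ((Fin n → ZMod 2) × Fin R)))
      (t := (Finset.univ : Finset M)) (f := fun p => e p.1 p.2)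
      (fun x _ => Finset.mem_univ _)
    have hcard : (Finset.univ : Finset ((Fin n → ZMod 2) × Fin R)).card = 2^n * R := by
      rw [Finset.card_univ, Fintype.card_prod, Fintype.card_fun, ZMod.card,
        Fintype.card_fin, Fintype.card_fin]
    simp only [hNdef, hEmdef]
    rw [← Nat.cast_sum]
    rw [← hfib, hcard]
    push_cast
    ring
  -- decompose the success count
  have hTsum : (Finset.univ.filter (fun q : (Fin n → ZMod 2) × Fin R × Fin n =>
        f q.2.2 (e q.1 q.2.1) = q.1 q.2.2)).card
      = ∑ t, ∑ m, ((Em m).filter (fun p => p.1 t = f t m)).card := by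
    have hc : ∀ (t : Fin n) (m : M), ((Em m).filter (fun p => p.1 t = f t m)).card
        = ∑ p : (Fin n → ZMod 2) × Fin R,
            if e p.1 p.2 = m ∧ p.1 t = f t m then 1 else 0 := by
      intro t m
      simp only [hEmdef]
      rw [Finset.filter_filter, Finset.card_filter]
    simp only [hc]
    have hcol : ∀ (t : Fin n) (p : (Fin n → ZMod 2) × Fin R),
        (∑ m : M, if e p.1 p.2 = m ∧ p.1 t = f t m then (1:ℕ) else 0)
          = if p.1 t = f t (e p.1 p.2) then 1 else 0 := by
      intro t p
      rw [Finset.sum_eq_single (e p.1 p.2)]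
      · simp
      · intro b _ hb
        exact if_neg (fun hcond => hb hcond.1.symm)
      · intro hm; exact absurd (Finset.mem_univ _) hm
    rw [Finset.sum_congr rfl fun t _ => Finset.sum_comm]
    simp only [hcol]
    rw [Finset.sum_comm]
    rw [Finset.card_filter, Fintype.sum_prod_type, Fintype.sum_prod_type]
    apply Finset.sum_congr rfl
    intro x _
    rw [Fintype.sum_prod_type]
    apply Finset.sum_congr rfl
    intro r _
    apply Finset.sum_congr rfl
    intro t _
    simp [eq_comm]
  -- combine everything over ℤ
  have h2T : 2 * (((Finset.univ.filter (fun q : (Fin n → ZMod 2) × Fin R × Fin n =>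
        f q.2.2 (e q.1 q.2.1) = q.1 q.2.2)).card : ℤ)) ≤ (n + 1) * ((2:ℤ)^n * R) := by
    rw [hTsum]
    push_cast
    calc 2 * ∑ t, ∑ m, (((Em m).filter (fun p => p.1 t = f t m)).card : ℤ)
        = ∑ m, ∑ t, 2 * (((Em m).filter (fun p => p.1 t = f t m)).card : ℤ) := by
          rw [Finset.mul_sum]
          rw [Finset.sum_comm]
          exact Finset.sum_congr rfl fun m _ => by rw [Finset.mul_sum]
      _ ≤ ∑ m, ∑ t, (N m + |A t m|) :=
          Finset.sum_le_sum fun m _ => Finset.sum_le_sum fun t _ => hS2 t m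
      _ = ∑ m, ((n : ℤ) * N m + ∑ t, |A t m|) := by
          apply Finset.sum_congr rfl
          intro m _
          rw [Finset.sum_add_distrib, Finset.sum_const, Finset.card_univ, Fintype.card_fin,
            nsmul_eq_mul]
      _ ≤ ∑ m, ((n : ℤ) * N m + N m) :=
          Finset.sum_le_sum fun m _ => by linarith [inv m]
      _ = (n + 1) * ∑ m, N m := by
          rw [Finset.mul_sum]
          exact Finset.sum_congr rfl fun m _ => by ring
      _ = (n + 1) * ((2:ℤ)^n * R) := by rw [hNtot]
  -- final real arithmetic
  have hn0 : (0:ℝ) < n := by positivity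
  have hR0 : (0:ℝ) < R := by exact_mod_cast hR
  have hden : (0:ℝ) < (n : ℝ) * 2 ^ n * R := by positivity
  rw [div_le_iff₀ hden]
  have hcast : (((Finset.univ.filter (fun q : (Fin n → ZMod 2) × Fin R × Fin n =>
      f q.2.2 (e q.1 q.2.1) = q.1 q.2.2)).card : ℝ))
      ≤ ((n : ℝ) + 1) * (2 ^ n * R) / 2 := by
    have h2T' : 2 * (((Finset.univ.filter (fun q : (Fin n → ZMod 2) × Fin R × Fin n =>
        f q.2.2 (e q.1 q.2.1) = q.1 q.2.2)).card : ℝ)) ≤ ((n:ℝ) + 1) * ((2:ℝ)^n * R) := by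
      exact_mod_cast h2T
    linarith
  have heq : (1 / 2 : ℝ) * (1 + 1 / n) * ((n : ℝ) * 2 ^ n * R)
      = ((n : ℝ) + 1) * (2 ^ n * R) / 2 := by
    field_simp
  rw [heq]
  exact hcast
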